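/- The function ũ(t̃,x̃) = (1+γ)x̃ + ln|1+γ| with γ < -1 satisfies the PDE e^{x̃} u_t = (e^{x̃} u_x)_x + e^{-γx̃} e^{u}; i.e., for all t̃, x̃: e^{x̃}·∂_t ũ = ∂_x(e^{x̃}·∂_x ũ) + e^{-γx̃}·e^{ũ}. -/
import Mathlib


/-- u(t,x) = (1+γ)x + ln|1+γ| with γ < -1 solves
    e^x u_t = (e^x u_x)_x + e^{-γx} e^u. -/
theorem stmt0 (γ : ℝ) (hγ : γ < -1)
    (u : ℝ → ℝ → ℝ)
    (hu : ∀ t x, u t x = (1 + γ) * x + Real.log |1 + γ|) :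
    ∀ t x : ℝ,
      Real.exp x * deriv (fun s => u s x) t =
        deriv (fun y => Real.exp y * deriv (fun y' => u t y') y) x
          + Real.exp (-γ * x) * Real.exp (u t x) := by
  intro t x
  have hne : (1 : ℝ) + γ ≠ 0 := by linarith
  have habs : |1 + γ| = -(1 + γ) := abs_of_neg (by linarith)
  have h1 : (fun s => u s x) = fun _ => (1 + γ) * x + Real.log |1 + γ| := by
    funext s; exact hu s x
  have h2 : ∀ y, deriv (fun y' => u t y') y = (1 + γ) := by
    intro y
    have : (fun y' => u t y') = fun y' => (1 + γ) * y' + Real.log |1 + γ| := by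
      funext y'; exact hu t y'
    rw [this]
    have : HasDerivAt (fun y' : ℝ => (1 + γ) * y' + Real.log |1 + γ|) (1 + γ) y := by
      simpa using ((hasDerivAt_id y).const_mul (1 + γ)).add_const (Real.log |1 + γ|)
    exact this.deriv
  have h3 : (fun y => Real.exp y * deriv (fun y' => u t y') y)
      = fun y => Real.exp y * (1 + γ) := by
    funext y; rw [h2 y]
  rw [h1, h3, deriv_const, hu t x]
  have h4 : deriv (fun y => Real.exp y * (1 + γ)) x = Real.exp x * (1 + γ) := by
    simpa using ((Real.hasDerivAt_exp x).mul_const (1 + γ)).deriv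
  rw [h4, Real.exp_add, Real.exp_log (abs_pos.mpr hne), habs]
  have : Real.exp (-γ * x) * Real.exp ((1 + γ) * x) = Real.exp x := by
    rw [← Real.exp_add]; ring_nf
  linear_combination (1 + γ) * this
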